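/- Let f be a bijection with reversor S, and let Γ be an S-symmetric orbit, i.e., there exist a point x₀ and j ∈ ℤ with S(x₀) = f^j(x₀). Then Γ contains a point fixed by S or a point fixed by f ∘ S: if j = 2k then f^k(x₀) ∈ Fix(S), and if j = 2k - 1 then f^k(x₀) ∈ Fix(f ∘ S). -/

import Mathlib

/-- A symmetric orbit of a reversible map contains a point on Fix(S) or Fix(f ∘ S):
if S(x₀) = f^j(x₀) with j = 2k then f^k(x₀) ∈ Fix(S); if j = 2k - 1 then
f^k(x₀) ∈ Fix(f ∘ S). -/
theorem symmetric_orbit_hits_fixed_sets {M : Type*} (f : Equiv.Perm M) (S : M → M)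
    (hrev : ∀ x, S (f x) = f⁻¹ (S x)) (x₀ : M) (j : ℤ)
    (hsym : S x₀ = (f ^ j) x₀) :
    (∀ k : ℤ, j = 2 * k → S ((f ^ k) x₀) = (f ^ k) x₀) ∧
    (∀ k : ℤ, j = 2 * k - 1 → f (S ((f ^ k) x₀)) = (f ^ k) x₀) := by
  have key : ∀ t : ℤ, ∀ x : M, S ((f ^ t) x) = (f ^ (-t)) (S x) := by
    intro t
    induction t using Int.induction_on with
    | zero => simp
    | succ n ih =>
      intro x
      have : ((n : ℤ) + 1) = (n : ℤ) + 1 := rfl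
      rw [show f ^ ((n : ℤ) + 1) = f ^ (n : ℤ) * f by rw [zpow_add, zpow_one]]
      simp only [Equiv.Perm.mul_apply]
      rw [ih (f x), hrev x]
      rw [show (-((n : ℤ) + 1)) = -(n : ℤ) + (-1) by ring, zpow_add]
      simp
    | pred n ih =>
      intro x
      rw [show ((-(n : ℤ) - 1)) = -(n : ℤ) + (-1) by ring, zpow_add]
      simp only [Equiv.Perm.mul_apply]
      have hx := ih ((f ^ (-1 : ℤ)) x)
      rw [hx]
      have h := hrev (f⁻¹ x)
      rw [show f (f⁻¹ x) = x from f.apply_symm_apply x] at h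
      have h2 : f (S x) = S (f⁻¹ x) := by rw [h, show f (f⁻¹ (S (f⁻¹ x))) = S (f⁻¹ x) from f.apply_symm_apply (S (f⁻¹ x))]
      have h3 : S ((f ^ (-1 : ℤ)) x) = (f ^ (1 : ℤ)) (S x) := by
        simpa [zpow_neg_one, zpow_one] using h2.symm
      rw [h3, ← Equiv.Perm.mul_apply, ← zpow_add]
      congr 1
      ring
  have main : ∀ k : ℤ, S ((f ^ k) x₀) = (f ^ (j - k)) x₀ := by
    intro k
    rw [key k x₀, hsym, ← Equiv.Perm.mul_apply, ← zpow_add]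
    ring_nf
  constructor
  · intro k hk
    rw [main k, hk]
    ring_nf
  · intro k hk
    rw [main k, hk]
    have : (2 * k - 1 - k) = k - 1 := by ring
    rw [this, show (f ^ (k - 1)) x₀ = (f ^ (-1 : ℤ)) ((f ^ k) x₀) by
      rw [← Equiv.Perm.mul_apply, ← zpow_add]; ring_nf]
    simp
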